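/- With Λ and R(λ) as above, for λ, μ ∈ P¹(k): Ext¹ computed in the subcategory D (extensions of direct sums of R(ν), ν ∈ k, by direct sums of R(∞)) satisfies Ext¹_D(R(λ), R(μ)) ≅ k if λ ∈ k and μ = ∞, and Ext¹_D(R(λ), R(μ)) = 0 otherwise. -/

import Mathlib

/-- A finite-dimensional module over Λ = k⟨quiver with vertices 0,1, arrows
α₀, α₁ : 1 → 0, β : 0 → 1⟩/(βα₀β, βα₁β), viewed as a representation:
spaces V0, V1, maps a0, a1 : V1 → V0 and b : V0 → V1 with b∘aᵢ∘b = 0. -/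
structure LRep (k : Type) [Field k] where
  V0 : Type
  V1 : Type
  [acg0 : AddCommGroup V0]
  [acg1 : AddCommGroup V1]
  [mod0 : Module k V0]
  [mod1 : Module k V1]
  fd0 : FiniteDimensional k V0
  fd1 : FiniteDimensional k V1
  a0 : V1 →ₗ[k] V0
  a1 : V1 →ₗ[k] V0
  b : V0 →ₗ[k] V1
  rel0 : b ∘ₗ a0 ∘ₗ b = 0
  rel1 : b ∘ₗ a1 ∘ₗ b = 0

attribute [instance] LRep.acg0 LRep.acg1 LRep.mod0 LRep.mod1

variable {k : Type} [Field k]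

/-- A homomorphism of Λ-modules. -/
structure LHom (M N : LRep k) where
  f0 : M.V0 →ₗ[k] N.V0
  f1 : M.V1 →ₗ[k] N.V1
  comma0 : f0 ∘ₗ M.a0 = N.a0 ∘ₗ f1
  comma1 : f0 ∘ₗ M.a1 = N.a1 ∘ₗ f1
  commb : f1 ∘ₗ M.b = N.b ∘ₗ f0

/-- The Λ-modules R(λ), λ ∈ P¹(k) = k ∪ {∞} (`none` = ∞): the simple regular
Kronecker modules R(λ) = (k, k; id, λ·id) for λ ∈ k and R(∞) = (k, k; 0, id),
with β acting as zero. -/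
def LR : Option k → LRep k
  | some l =>
    { V0 := k, V1 := k, fd0 := inferInstance, fd1 := inferInstance
      a0 := LinearMap.id, a1 := l • LinearMap.id, b := 0
      rel0 := by simp, rel1 := by simp }
  | none =>
    { V0 := k, V1 := k, fd0 := inferInstance, fd1 := inferInstance
      a0 := 0, a1 := LinearMap.id, b := 0
      rel0 := by simp, rel1 := by simp }

/-- An extension 0 → B → E → A → 0 of Λ-modules. -/
structure LExt (A B : LRep k) where
  E : LRep k
  i : LHom B E
  p : LHom E A
  inj0 : Function.Injective i.f0
  inj1 : Function.Injective i.f1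
  surj0 : Function.Surjective p.f0
  surj1 : Function.Surjective p.f1
  exact0 : LinearMap.range i.f0 = LinearMap.ker p.f0
  exact1 : LinearMap.range i.f1 = LinearMap.ker p.f1

/-- An extension splits iff the inclusion admits a retraction. -/
def LExt.Splits {A B : LRep k} (X : LExt A B) : Prop :=
  ∃ r : LHom X.E B, (∀ x, r.f0 (X.i.f0 x) = x) ∧ (∀ x, r.f1 (X.i.f1 x) = x)

/-- A pair of subspaces of a Λ-module closed under α₀, α₁ and β. -/
def LSubrep (M : LRep k) (p0 : Submodule k M.V0) (p1 : Submodule k M.V1) : Prop :=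
  (∀ x ∈ p1, M.a0 x ∈ p0) ∧ (∀ x ∈ p1, M.a1 x ∈ p0) ∧ (∀ x ∈ p0, M.b x ∈ p1)

/-- Membership in the subcategory D: M has a submodule M' (given by (p0, p1))
which is a direct sum of copies of R(∞) — i.e. on (p0, p1) the map α₀ and β
vanish and α₁ is an isomorphism p1 ≅ p0 — such that M/M' is a direct sum of
modules R(ν) with ν ∈ k — i.e. on the quotient β vanishes, the induced map α₀
is an isomorphism and the induced α₁ equals g ∘ α₀ for a diagonalizable
endomorphism g (its eigenspaces for eigenvalues ν ∈ k exhaust the quotient). -/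
def InD (M : LRep k) : Prop :=
  ∃ (p0 : Submodule k M.V0) (p1 : Submodule k M.V1),
    LSubrep M p0 p1 ∧
    (∀ x ∈ p1, M.a0 x = 0) ∧
    Submodule.map M.a1 p1 = p0 ∧
    (∀ x ∈ p1, M.a1 x = 0 → x = 0) ∧
    (∀ x ∈ p0, M.b x = 0) ∧
    (∀ x : M.V0, M.b x ∈ p1) ∧
    ∀ (h0 : p1 ≤ p0.comap M.a0) (h1 : p1 ≤ p0.comap M.a1),
      Function.Bijective (Submodule.mapQ p1 p0 M.a0 h0) ∧
      ∃ g : Module.End k (M.V0 ⧸ p0),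
        Submodule.mapQ p1 p0 M.a1 h1 = g ∘ₗ Submodule.mapQ p1 p0 M.a0 h0 ∧
        (⨆ ν : k, g.eigenspace ν) = ⊤


section auxx
variable {k : Type} [Field k]

lemma lin_k {E : Type} [AddCommGroup E] [Module k E] (f : k →ₗ[k] E) (x : k) :
    f x = x • f 1 := by rw [← map_smul, smul_eq_mul, mul_one]

lemma coord_exists {E : Type} [AddCommGroup E] [Module k E]
    (i : k →ₗ[k] E) (p : E →ₗ[k] k) (hinj : Function.Injective i)
    (hex : LinearMap.range i = LinearMap.ker p)
    (e : E) (he : p e = 1) :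
    ∃ r : E →ₗ[k] k, (∀ x : k, r (i x) = x) ∧ r e = 0 ∧
      ∀ v : E, v = i (r v) + p v • e := by
  have key : ∀ v : E, ∃ x : k, i x = v - p v • e := by
    intro v
    have hm : v - p v • e ∈ LinearMap.ker p := by
      simp [LinearMap.mem_ker, map_sub, map_smul, he, smul_eq_mul]
    rw [← hex] at hm
    exact hm
  choose f hf using key
  have fadd : ∀ v w, f (v + w) = f v + f w := by
    intro v w; apply hinj
    rw [map_add, hf, hf, hf, map_add]
    module
  have fsmul : ∀ (c : k) (v), f (c • v) = c • f v := by
    intro c v; apply hinj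
    rw [map_smul, hf, hf, map_smul]
    simp only [smul_eq_mul]
    module
  refine ⟨⟨⟨f, fadd⟩, fsmul⟩, ?_, ?_, ?_⟩
  · intro x
    apply hinj
    show i (f (i x)) = i x
    rw [hf]
    have hz : p (i x) = 0 := by
      have : i x ∈ LinearMap.ker p := hex ▸ LinearMap.mem_range_self i x
      exact this
    rw [hz]; module
  · apply hinj
    show i (f e) = i 0
    rw [hf, he, map_zero]; module
  · intro v
    show v = i (f v) + p v • e
    rw [hf]; module

end auxx

section abs
variable {k : Type} [Field k]

lemma ker_mem {V : Type} [AddCommGroup V] [Module k V] (i : k →ₗ[k] V) (p : V →ₗ[k] k)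
    (ex : LinearMap.range i = LinearMap.ker p) (v : V) (hv : p v = 0) :
    ∃ x : k, i x = v := by
  have : v ∈ LinearMap.ker p := hv
  rw [← ex] at this
  exact this

lemma pi_zero {V : Type} [AddCommGroup V] [Module k V] (i : k →ₗ[k] V) (p : V →ₗ[k] k)
    (ex : LinearMap.range i = LinearMap.ker p) (x : k) : p (i x) = 0 := by
  have : i x ∈ LinearMap.ker p := ex ▸ LinearMap.mem_range_self _ x
  exact this

lemma std_abs (M : LRep k) (lam : k)
    (i0 : k →ₗ[k] M.V0) (i1 : k →ₗ[k] M.V1) (p0 : M.V0 →ₗ[k] k) (p1 : M.V1 →ₗ[k] k)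
    (inj0 : Function.Injective i0) (inj1 : Function.Injective i1)
    (surj1 : Function.Surjective p1)
    (ex0 : LinearMap.range i0 = LinearMap.ker p0)
    (ex1 : LinearMap.range i1 = LinearMap.ker p1)
    (ia0 : ∀ x : k, M.a0 (i1 x) = 0)
    (ia1 : ∀ x : k, M.a1 (i1 x) = i0 x)
    (ib : ∀ x : k, M.b (i0 x) = 0)
    (pa0 : ∀ v, p0 (M.a0 v) = p1 v)
    (pa1 : ∀ v, p0 (M.a1 v) = lam * p1 v)
    (pb : ∀ v, p1 (M.b v) = 0) :
    ∃ (e0 : M.V0) (e1 : M.V1) (r0 : M.V0 →ₗ[k] k) (r1 : M.V1 →ₗ[k] k) (t : k),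
      p0 e0 = 1 ∧ p1 e1 = 1 ∧
      (∀ x : k, r0 (i0 x) = x) ∧ r0 e0 = 0 ∧
      (∀ x : k, r1 (i1 x) = x) ∧ r1 e1 = 0 ∧
      (∀ x : k, p0 (i0 x) = 0) ∧ (∀ x : k, p1 (i1 x) = 0) ∧
      (∀ v, v = i0 (r0 v) + p0 v • e0) ∧
      (∀ v, v = i1 (r1 v) + p1 v • e1) ∧
      (∀ v, M.a0 v = p1 v • e0) ∧
      (∀ v, M.a1 v = i0 (r1 v) + (lam * p1 v) • e0) ∧
      (∀ v, M.b v = p0 v • i1 t) ∧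
      (t = 0 → (∀ v, r0 (M.a0 v) = 0) ∧ (∀ v, r0 (M.a1 v) = r1 v) ∧
        (∀ v, r1 (M.b v) = 0)) := by
  have pi0 := pi_zero i0 p0 ex0
  have pi1 := pi_zero i1 p1 ex1
  obtain ⟨e1'', he1''⟩ := surj1 1
  obtain ⟨g, hg⟩ := ker_mem i0 p0 ex0 (M.a1 e1'' - lam • M.a0 e1'')
    (by rw [map_sub, map_smul, pa0, pa1, he1'']; simp)
  set e1 : M.V1 := e1'' - g • i1 1 with he1def
  have he1 : p1 e1 = 1 := by
    rw [he1def, map_sub, map_smul, he1'', pi1, smul_zero, sub_zero]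
  set e0 : M.V0 := M.a0 e1 with he0def
  have hE0a : e0 = M.a0 e1'' := by
    rw [he0def, he1def, map_sub, map_smul, ia0, smul_zero, sub_zero]
  have hpE0 : p0 e0 = 1 := by rw [he0def, pa0, he1]
  have ha1e1 : M.a1 e1 = lam • e0 := by
    rw [he1def, map_sub, map_smul, ia1, hE0a]
    have h2 : M.a1 e1'' = lam • M.a0 e1'' + i0 g := by rw [hg]; module
    rw [h2, lin_k i0 g]
    module
  obtain ⟨r1, hr1i, hr1e, hdec1⟩ := coord_exists i1 p1 inj1 ex1 e1 he1
  obtain ⟨r0, hr0i, hr0e, hdec0⟩ := coord_exists i0 p0 inj0 ex0 e0 hpE0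
  obtain ⟨t, ht⟩ := ker_mem i1 p1 ex1 (M.b e0) (pb e0)
  have A0 : ∀ v, M.a0 v = p1 v • e0 := by
    intro v
    conv_lhs => rw [hdec1 v]
    rw [map_add, map_smul, ia0, ← he0def]
    module
  have A1 : ∀ v, M.a1 v = i0 (r1 v) + (lam * p1 v) • e0 := by
    intro v
    conv_lhs => rw [hdec1 v]
    rw [map_add, map_smul, ia1, ha1e1, smul_smul, mul_comm (p1 v) lam]
  have Bf : ∀ v, M.b v = p0 v • i1 t := by
    intro v
    conv_lhs => rw [hdec0 v]
    rw [map_add, map_smul, ib, ht]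
    module
  refine ⟨e0, e1, r0, r1, t, hpE0, he1, hr0i, hr0e, hr1i, hr1e, pi0, pi1, hdec0, hdec1,
    A0, A1, Bf, ?_⟩
  intro ht0
  refine ⟨?_, ?_, ?_⟩
  · intro v; rw [A0, map_smul, hr0e, smul_zero]
  · intro v; rw [A1, map_add, map_smul, hr0i, hr0e, smul_zero, add_zero]
  · intro v; rw [Bf, ht0, map_zero, smul_zero, map_zero]

-- splitting, case l = none, m = none
lemma split_nn (M : LRep k)
    (i0 : k →ₗ[k] M.V0) (i1 : k →ₗ[k] M.V1) (p0 : M.V0 →ₗ[k] k) (p1 : M.V1 →ₗ[k] k)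
    (inj0 : Function.Injective i0) (inj1 : Function.Injective i1)
    (surj1 : Function.Surjective p1)
    (ex0 : LinearMap.range i0 = LinearMap.ker p0)
    (ex1 : LinearMap.range i1 = LinearMap.ker p1)
    (ia0 : ∀ x : k, M.a0 (i1 x) = 0)
    (ia1 : ∀ x : k, M.a1 (i1 x) = i0 x)
    (ib : ∀ x : k, M.b (i0 x) = 0)
    (pa0 : ∀ v, p0 (M.a0 v) = 0)
    (pa1 : ∀ v, p0 (M.a1 v) = p1 v)
    (pb : ∀ v, p1 (M.b v) = 0)
    (hD : InD M) :
    ∃ (r0 : M.V0 →ₗ[k] k) (r1 : M.V1 →ₗ[k] k),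
      (∀ x : k, r0 (i0 x) = x) ∧ (∀ x : k, r1 (i1 x) = x) ∧
      (∀ v, r0 (M.a0 v) = 0) ∧ (∀ v, r0 (M.a1 v) = r1 v) ∧ (∀ v, r1 (M.b v) = 0) := by
  have pi0 := pi_zero i0 p0 ex0
  have pi1 := pi_zero i1 p1 ex1
  obtain ⟨e1', he1'⟩ := surj1 1
  obtain ⟨g, hg⟩ := ker_mem i0 p0 ex0 (M.a0 e1') (pa0 e1')
  set e0 : M.V0 := M.a1 e1' with he0def
  have hpE0 : p0 e0 = 1 := by rw [he0def, pa1, he1']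
  obtain ⟨r1, hr1i, hr1e, hdec1⟩ := coord_exists i1 p1 inj1 ex1 e1' he1'
  obtain ⟨r0, hr0i, hr0e, hdec0⟩ := coord_exists i0 p0 inj0 ex0 e0 hpE0
  have A0 : ∀ v, M.a0 v = p1 v • i0 g := by
    intro v
    conv_lhs => rw [hdec1 v]
    rw [map_add, map_smul, ia0, hg]
    module
  have A1 : ∀ v, M.a1 v = i0 (r1 v) + p1 v • e0 := by
    intro v
    conv_lhs => rw [hdec1 v]
    rw [map_add, map_smul, ia1, ← he0def]
  obtain ⟨q0, q1, hsub, hz0, hmap, hai, hb0, hbin, hquot⟩ := hD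
  have h0 : q1 ≤ Submodule.comap M.a0 q0 := fun v hv => hsub.1 v hv
  have h1 : q1 ≤ Submodule.comap M.a1 q0 := fun v hv => hsub.2.1 v hv
  obtain ⟨hbij, gq, hgq, heig⟩ := hquot h0 h1
  -- first: g = 0
  have hgz : g = 0 := by
    by_contra hg0
    have hq1 : ∀ v ∈ q1, p1 v = 0 := by
      intro v hv
      have h := hz0 v hv
      rw [A0] at h
      have h3 : i0 (p1 v * g) = 0 := by
        rw [← smul_eq_mul, map_smul]; exact h
      have h2 : p1 v * g = 0 := by
        apply inj0; rw [h3, map_zero]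
      exact (mul_eq_zero.mp h2).resolve_right hg0
    have hq0 : ∀ w ∈ q0, p0 w = 0 := by
      intro w hw
      rw [← hmap] at hw
      obtain ⟨v, hv, rfl⟩ := hw
      rw [pa1]
      exact hq1 v hv
    obtain ⟨qq, hqq⟩ := hbij.2 (q0.mkQ e0)
    obtain ⟨v, rfl⟩ := q1.mkQ_surjective qq
    rw [Submodule.mkQ_apply, Submodule.mapQ_apply, Submodule.mkQ_apply,
      Submodule.Quotient.eq] at hqq
    have := hq0 _ hqq
    rw [map_sub, pa0, hpE0, zero_sub] at this
    exact one_ne_zero (neg_eq_zero.mp this)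
  have A0z : ∀ v, M.a0 v = 0 := by
    intro v; rw [A0, hgz, map_zero, smul_zero]
  -- q1 = top
  have hq1top : ∀ v, v ∈ q1 := by
    intro v
    have h : Submodule.mapQ q1 q0 M.a0 h0 (q1.mkQ v) = 0 := by
      rw [Submodule.mkQ_apply, Submodule.mapQ_apply, A0z, Submodule.Quotient.mk_eq_zero]
      exact q0.zero_mem
    have h2 : q1.mkQ v = 0 := by
      apply hbij.1
      rw [h, map_zero]
    rwa [Submodule.mkQ_apply, Submodule.Quotient.mk_eq_zero] at h2
  have he0q0 : e0 ∈ q0 := by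
    rw [← hmap]
    exact ⟨e1', hq1top e1', rfl⟩
  have hbz : ∀ v, M.b v = 0 := by
    intro v
    conv_lhs => rw [hdec0 v]
    rw [map_add, map_smul, ib, hb0 e0 he0q0, smul_zero, add_zero]
  exact ⟨r0, r1, hr0i, hr1i,
    fun v => by rw [A0z, map_zero],
    fun v => by rw [A1, map_add, map_smul, hr0i, hr0e, smul_zero, add_zero],
    fun v => by rw [hbz, map_zero]⟩

-- splitting, case l = none, m = some mu
lemma split_ns (M : LRep k) (mu : k)
    (i0 : k →ₗ[k] M.V0) (i1 : k →ₗ[k] M.V1) (p0 : M.V0 →ₗ[k] k) (p1 : M.V1 →ₗ[k] k)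
    (inj0 : Function.Injective i0) (inj1 : Function.Injective i1)
    (surj1 : Function.Surjective p1)
    (ex0 : LinearMap.range i0 = LinearMap.ker p0)
    (ex1 : LinearMap.range i1 = LinearMap.ker p1)
    (ia0 : ∀ x : k, M.a0 (i1 x) = i0 x)
    (ia1 : ∀ x : k, M.a1 (i1 x) = mu • i0 x)
    (ib : ∀ x : k, M.b (i0 x) = 0)
    (pa0 : ∀ v, p0 (M.a0 v) = 0)
    (pa1 : ∀ v, p0 (M.a1 v) = p1 v)
    (pb : ∀ v, p1 (M.b v) = 0)
    (hD : InD M) :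
    ∃ (r0 : M.V0 →ₗ[k] k) (r1 : M.V1 →ₗ[k] k),
      (∀ x : k, r0 (i0 x) = x) ∧ (∀ x : k, r1 (i1 x) = x) ∧
      (∀ v, r0 (M.a0 v) = r1 v) ∧ (∀ v, r0 (M.a1 v) = mu * r1 v) ∧
      (∀ v, r1 (M.b v) = 0) := by
  have pi0 := pi_zero i0 p0 ex0
  have pi1 := pi_zero i1 p1 ex1
  obtain ⟨e1'', he1''⟩ := surj1 1
  obtain ⟨g, hg⟩ := ker_mem i0 p0 ex0 (M.a0 e1'') (pa0 e1'')
  set e1 : M.V1 := e1'' - g • i1 1 with he1def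
  have he1 : p1 e1 = 1 := by
    rw [he1def, map_sub, map_smul, he1'', pi1, smul_zero, sub_zero]
  have ha0e1 : M.a0 e1 = 0 := by
    rw [he1def, map_sub, map_smul, ia0, ← hg, lin_k i0 g]
    module
  set e0 : M.V0 := M.a1 e1 with he0def
  have hpE0 : p0 e0 = 1 := by rw [he0def, pa1, he1]
  obtain ⟨r1, hr1i, hr1e, hdec1⟩ := coord_exists i1 p1 inj1 ex1 e1 he1
  obtain ⟨r0, hr0i, hr0e, hdec0⟩ := coord_exists i0 p0 inj0 ex0 e0 hpE0
  have A0 : ∀ v, M.a0 v = i0 (r1 v) := by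
    intro v
    conv_lhs => rw [hdec1 v]
    rw [map_add, map_smul, ia0, ha0e1, smul_zero, add_zero]
  have A1 : ∀ v, M.a1 v = mu • i0 (r1 v) + p1 v • e0 := by
    intro v
    conv_lhs => rw [hdec1 v]
    rw [map_add, map_smul, ia1, ← he0def]
  obtain ⟨q0, q1, hsub, hz0, hmap, hai, hb0, hbin, hquot⟩ := hD
  have hq1span : ∀ v ∈ q1, v = p1 v • e1 := by
    intro v hv
    have h := hz0 v hv
    rw [A0] at h
    have hr : r1 v = 0 := by apply inj0; rw [h, map_zero]
    conv_lhs => rw [hdec1 v]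
    rw [hr, map_zero, zero_add]
  have hbz : ∀ v, M.b v = 0 := by
    intro v
    have h := hq1span (M.b v) (hbin v)
    rw [pb, zero_smul] at h
    exact h
  exact ⟨r0, r1, hr0i, hr1i,
    fun v => by rw [A0, hr0i],
    fun v => by
      rw [A1, map_add, map_smul, map_smul, hr0i, hr0e, smul_zero, add_zero, smul_eq_mul],
    fun v => by rw [hbz, map_zero]⟩

end abs

section abs2
variable {k : Type} [Field k]

-- splitting, case l = some lam, m = some mu
lemma split_ss (M : LRep k) (lam mu : k)
    (i0 : k →ₗ[k] M.V0) (i1 : k →ₗ[k] M.V1) (p0 : M.V0 →ₗ[k] k) (p1 : M.V1 →ₗ[k] k)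
    (inj0 : Function.Injective i0) (inj1 : Function.Injective i1)
    (surj1 : Function.Surjective p1)
    (ex0 : LinearMap.range i0 = LinearMap.ker p0)
    (ex1 : LinearMap.range i1 = LinearMap.ker p1)
    (ia0 : ∀ x : k, M.a0 (i1 x) = i0 x)
    (ia1 : ∀ x : k, M.a1 (i1 x) = mu • i0 x)
    (ib : ∀ x : k, M.b (i0 x) = 0)
    (pa0 : ∀ v, p0 (M.a0 v) = p1 v)
    (pa1 : ∀ v, p0 (M.a1 v) = lam * p1 v)
    (pb : ∀ v, p1 (M.b v) = 0)
    (hD : InD M) :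
    ∃ (r0 : M.V0 →ₗ[k] k) (r1 : M.V1 →ₗ[k] k),
      (∀ x : k, r0 (i0 x) = x) ∧ (∀ x : k, r1 (i1 x) = x) ∧
      (∀ v, r0 (M.a0 v) = r1 v) ∧ (∀ v, r0 (M.a1 v) = mu * r1 v) ∧
      (∀ v, r1 (M.b v) = 0) := by
  have pi0 := pi_zero i0 p0 ex0
  have pi1 := pi_zero i1 p1 ex1
  obtain ⟨e1'', he1''⟩ := surj1 1
  have hpE0'' : p0 (M.a0 e1'') = 1 := by rw [pa0, he1'']
  obtain ⟨r1'', hr1i'', hr1e'', hdec1''⟩ := coord_exists i1 p1 inj1 ex1 e1'' he1''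
  obtain ⟨r0'', hr0i'', hr0e'', hdec0''⟩ := coord_exists i0 p0 inj0 ex0 _ hpE0''
  have A0'' : ∀ v, M.a0 v = i0 (r1'' v) + p1 v • M.a0 e1'' := by
    intro v
    conv_lhs => rw [hdec1'' v]
    rw [map_add, map_smul, ia0]
  have a0inj : Function.Injective M.a0 := by
    intro v w hvw
    have h : M.a0 (v - w) = 0 := by rw [map_sub, hvw, sub_self]
    have hp : p1 (v - w) = 0 := by rw [← pa0, h, map_zero]
    rw [A0'', hp, zero_smul, add_zero] at h
    have hr : r1'' (v - w) = 0 := by apply inj0; rw [h, map_zero]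
    have hz : v - w = 0 := by
      conv_lhs => rw [hdec1'' (v - w)]
      rw [hr, hp, map_zero, zero_add, zero_smul]
    exact sub_eq_zero.mp hz
  obtain ⟨q0, q1, hsub, hz0, hmap, hai, hb0, hbin, hquot⟩ := hD
  have hq1 : ∀ v ∈ q1, v = 0 := by
    intro v hv
    apply a0inj
    rw [hz0 v hv, map_zero]
  have hbz : ∀ v, M.b v = 0 := fun v => hq1 _ (hbin v)
  obtain ⟨g, hg⟩ := ker_mem i0 p0 ex0 (M.a1 e1'' - lam • M.a0 e1'')
    (by rw [map_sub, map_smul, pa0, pa1, he1'']; simp)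
  have h2 : M.a1 e1'' = lam • M.a0 e1'' + g • i0 1 := by
    rw [← lin_k i0 g, hg]; module
  obtain ⟨e1, he1, ha1e1⟩ : ∃ e1 : M.V1, p1 e1 = 1 ∧ M.a1 e1 = lam • M.a0 e1 := by
    by_cases hlm : lam = mu
    · -- need g = 0, via diagonalizability of the quotient action
      subst hlm
      have hgz : g = 0 := by
        by_contra hg0
        have hq0 : ∀ w ∈ q0, w = 0 := by
          intro w hw
          rw [← hmap] at hw
          obtain ⟨v, hv, rfl⟩ := hw
          rw [hq1 v hv, map_zero]
        have hmkinj : Function.Injective q0.mkQ := by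
          rw [← LinearMap.ker_eq_bot, Submodule.ker_mkQ, Submodule.eq_bot_iff]
          exact hq0
        have h0 : q1 ≤ Submodule.comap M.a0 q0 := fun v hv => hsub.1 v hv
        have h1 : q1 ≤ Submodule.comap M.a1 q0 := fun v hv => hsub.2.1 v hv
        obtain ⟨hbij, gq, hgq, heig⟩ := hquot h0 h1
        have gact : ∀ v, q0.mkQ (M.a1 v) = gq (q0.mkQ (M.a0 v)) := by
          intro v
          have h := LinearMap.congr_fun hgq (q1.mkQ v)
          rw [Submodule.mkQ_apply, LinearMap.comp_apply, Submodule.mapQ_apply,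
            Submodule.mapQ_apply] at h
          exact h
        set u : M.V0 ⧸ q0 := q0.mkQ (i0 1) with hu
        set w0 : M.V0 ⧸ q0 := q0.mkQ (M.a0 e1'') with hw0
        have hind : ∀ a b : k, a • u + b • w0 = 0 → a = 0 ∧ b = 0 := by
          intro a b hab
          have h2' : a • i0 1 + b • M.a0 e1'' = 0 := by
            apply hmkinj
            rw [map_add, map_smul, map_smul, map_zero]
            exact hab
          have hb : b = 0 := by
            have h3 := congrArg p0 h2'
            rw [map_add, map_smul, map_smul, pi0, hpE0'', map_zero, smul_zero,
              smul_eq_mul, mul_one, zero_add] at h3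
            exact h3
          refine ⟨?_, hb⟩
          rw [hb, zero_smul, add_zero] at h2'
          have h4 : i0 a = 0 := by rw [lin_k i0 a]; exact h2'
          apply inj0; rw [h4, map_zero]
        have hgu : gq u = lam • u := by
          have h3 := gact (i1 1)
          rw [ia0, ia1] at h3
          rw [hu, ← h3, map_smul]
        have hgw : gq w0 = lam • w0 + g • u := by
          rw [hw0, ← gact, h2, map_add, map_smul, map_smul]
        have hle : ∀ ν : k, Module.End.eigenspace gq ν ≤ Submodule.span k {u} := by
          intro ν w hw
          rw [Module.End.mem_eigenspace_iff] at hw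
          obtain ⟨v, rfl⟩ := q0.mkQ_surjective w
          have hv : q0.mkQ v = r0'' v • u + p0 v • w0 := by
            conv_lhs => rw [hdec0'' v]
            rw [map_add, map_smul, hu, hw0, lin_k i0 (r0'' v), map_smul]
          rw [hv, map_add, map_smul, map_smul, hgu, hgw] at hw
          have hw' : (lam * r0'' v + g * p0 v - ν * r0'' v) • u
              + (lam * p0 v - ν * p0 v) • w0 = 0 := by
            have h4 := sub_eq_zero.mpr hw
            rw [← h4]
            module
          obtain ⟨hc1, hc2⟩ := hind _ _ hw'
          by_cases hν : ν = lam
          · subst hν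
            have hy : p0 v = 0 := by
              have h5 : g * p0 v = 0 := by linear_combination hc1
              exact (mul_eq_zero.mp h5).resolve_left hg0
            rw [hv, hy, zero_smul, add_zero]
            exact Submodule.smul_mem _ _ (Submodule.mem_span_singleton_self u)
          · have hne : lam - ν ≠ 0 := sub_ne_zero.mpr (fun hh => hν hh.symm)
            have hy : p0 v = 0 := by
              have h5 : (lam - ν) * p0 v = 0 := by linear_combination hc2
              exact (mul_eq_zero.mp h5).resolve_left hne
            have hx : r0'' v = 0 := by
              have h5 : (lam - ν) * r0'' v = 0 := by linear_combination hc1 - g * hy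
              exact (mul_eq_zero.mp h5).resolve_left hne
            rw [hv, hx, hy, zero_smul, zero_smul, add_zero]
            exact Submodule.zero_mem _
        have hsup : (⊤ : Submodule k (M.V0 ⧸ q0)) ≤ Submodule.span k {u} := by
          rw [← heig]
          exact iSup_le hle
        have hw0mem : w0 ∈ Submodule.span k {u} := hsup Submodule.mem_top
        rw [Submodule.mem_span_singleton] at hw0mem
        obtain ⟨s, hs⟩ := hw0mem
        have h6 : (-s) • u + (1 : k) • w0 = 0 := by rw [← hs]; module
        exact one_ne_zero (hind _ _ h6).2
      exact ⟨e1'', he1'', by rw [h2, hgz, zero_smul, add_zero]⟩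
    · -- lam ≠ mu : adjust e1
      have hne : lam - mu ≠ 0 := sub_ne_zero.mpr hlm
      refine ⟨e1'' + (g / (lam - mu)) • i1 1, ?_, ?_⟩
      · rw [map_add, map_smul, he1'', pi1, smul_zero, add_zero]
      · rw [map_add, map_smul, map_add, map_smul, ia0, ia1, h2]
        have hkey : g + (g / (lam - mu)) * mu = lam * (g / (lam - mu)) := by
          field_simp
          ring
        rw [smul_add, smul_smul, smul_smul, ← hkey, add_smul]
        module
  -- conclusion
  have hpe0 : p0 (M.a0 e1) = 1 := by rw [pa0, he1]
  obtain ⟨r1, hr1i, hr1e, hdec1⟩ := coord_exists i1 p1 inj1 ex1 e1 he1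
  obtain ⟨r0, hr0i, hr0e, hdec0⟩ := coord_exists i0 p0 inj0 ex0 _ hpe0
  have A0 : ∀ v, M.a0 v = i0 (r1 v) + p1 v • M.a0 e1 := by
    intro v
    conv_lhs => rw [hdec1 v]
    rw [map_add, map_smul, ia0]
  have A1 : ∀ v, M.a1 v = mu • i0 (r1 v) + p1 v • (lam • M.a0 e1) := by
    intro v
    conv_lhs => rw [hdec1 v]
    rw [map_add, map_smul, ia1, ha1e1]
  exact ⟨r0, r1, hr0i, hr1i,
    fun v => by rw [A0, map_add, map_smul, hr0i, hr0e, smul_zero, add_zero],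
    fun v => by
      rw [A1, map_add, map_smul, map_smul, map_smul, hr0i, hr0e, smul_zero, smul_zero,
        add_zero, smul_eq_mul],
    fun v => by rw [hbz, map_zero]⟩

end abs2

section abs3
variable {k : Type} [Field k]

lemma uniq_abs (lam : k) (M N : LRep k)
    (iM0 : k →ₗ[k] M.V0) (iM1 : k →ₗ[k] M.V1) (pM0 : M.V0 →ₗ[k] k) (pM1 : M.V1 →ₗ[k] k)
    (iN0 : k →ₗ[k] N.V0) (iN1 : k →ₗ[k] N.V1) (pN0 : N.V0 →ₗ[k] k) (pN1 : N.V1 →ₗ[k] k)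
    (eX0 : M.V0) (eX1 : M.V1) (rX0 : M.V0 →ₗ[k] k) (rX1 : M.V1 →ₗ[k] k) (tX : k)
    (eY0 : N.V0) (eY1 : N.V1) (rY0 : N.V0 →ₗ[k] k) (rY1 : N.V1 →ₗ[k] k) (tY : k)
    (XpE0 : pM0 eX0 = 1) (XpE1 : pM1 eX1 = 1)
    (Xr0i : ∀ x : k, rX0 (iM0 x) = x) (Xr0e : rX0 eX0 = 0)
    (Xr1i : ∀ x : k, rX1 (iM1 x) = x) (Xr1e : rX1 eX1 = 0)
    (Xpi0 : ∀ x : k, pM0 (iM0 x) = 0) (Xpi1 : ∀ x : k, pM1 (iM1 x) = 0)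
    (Xdec0 : ∀ v, v = iM0 (rX0 v) + pM0 v • eX0)
    (Xdec1 : ∀ v, v = iM1 (rX1 v) + pM1 v • eX1)
    (XA0 : ∀ v, M.a0 v = pM1 v • eX0)
    (XA1 : ∀ v, M.a1 v = iM0 (rX1 v) + (lam * pM1 v) • eX0)
    (XB : ∀ v, M.b v = pM0 v • iM1 tX)
    (YpE0 : pN0 eY0 = 1) (YpE1 : pN1 eY1 = 1)
    (Yr0i : ∀ x : k, rY0 (iN0 x) = x) (Yr0e : rY0 eY0 = 0)
    (Yr1i : ∀ x : k, rY1 (iN1 x) = x) (Yr1e : rY1 eY1 = 0)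
    (Ypi0 : ∀ x : k, pN0 (iN0 x) = 0) (Ypi1 : ∀ x : k, pN1 (iN1 x) = 0)
    (Ydec0 : ∀ v, v = iN0 (rY0 v) + pN0 v • eY0)
    (Ydec1 : ∀ v, v = iN1 (rY1 v) + pN1 v • eY1)
    (YA0 : ∀ v, N.a0 v = pN1 v • eY0)
    (YA1 : ∀ v, N.a1 v = iN0 (rY1 v) + (lam * pN1 v) • eY0)
    (YB : ∀ v, N.b v = pN0 v • iN1 tY)
    (htX : tX ≠ 0) (htY : tY ≠ 0) :
    ∃ c : k, c ≠ 0 ∧ ∃ (f0 : M.V0 ≃ₗ[k] N.V0) (f1 : M.V1 ≃ₗ[k] N.V1),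
      (∀ v, f0 (M.a0 v) = N.a0 (f1 v)) ∧
      (∀ v, f0 (M.a1 v) = N.a1 (f1 v)) ∧
      (∀ v, f1 (M.b v) = N.b (f0 v)) ∧
      (∀ x : k, f0 (iM0 x) = iN0 (c * x)) ∧
      (∀ x : k, f1 (iM1 x) = iN1 (c * x)) ∧
      (∀ v, pN0 (f0 v) = pM0 v) ∧
      (∀ v, pN1 (f1 v) = pM1 v) := by
  set c : k := tY / tX with hc
  have hc0 : c ≠ 0 := div_ne_zero htY htX
  have hctX : c * tX = tY := by rw [hc]; exact div_mul_cancel₀ tY htX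
  set F0 : M.V0 →ₗ[k] N.V0 :=
    iN0 ∘ₗ (c • rX0) + LinearMap.toSpanSingleton k N.V0 eY0 ∘ₗ pM0 with hF0
  set F1 : M.V1 →ₗ[k] N.V1 :=
    iN1 ∘ₗ (c • rX1) + LinearMap.toSpanSingleton k N.V1 eY1 ∘ₗ pM1 with hF1
  set G0 : N.V0 →ₗ[k] M.V0 :=
    iM0 ∘ₗ (c⁻¹ • rY0) + LinearMap.toSpanSingleton k M.V0 eX0 ∘ₗ pN0 with hG0
  set G1 : N.V1 →ₗ[k] M.V1 :=
    iM1 ∘ₗ (c⁻¹ • rY1) + LinearMap.toSpanSingleton k M.V1 eX1 ∘ₗ pN1 with hG1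
  have hF0a : ∀ v, F0 v = iN0 (c * rX0 v) + pM0 v • eY0 := by
    intro v
    simp [hF0, LinearMap.toSpanSingleton_apply, smul_eq_mul]
  have hF1a : ∀ v, F1 v = iN1 (c * rX1 v) + pM1 v • eY1 := by
    intro v
    simp [hF1, LinearMap.toSpanSingleton_apply, smul_eq_mul]
  have hG0a : ∀ v, G0 v = iM0 (c⁻¹ * rY0 v) + pN0 v • eX0 := by
    intro v
    simp [hG0, LinearMap.toSpanSingleton_apply, smul_eq_mul]
  have hG1a : ∀ v, G1 v = iM1 (c⁻¹ * rY1 v) + pN1 v • eX1 := by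
    intro v
    simp [hG1, LinearMap.toSpanSingleton_apply, smul_eq_mul]
  -- evaluation of the coordinates on F-values
  have rY0F : ∀ v, rY0 (F0 v) = c * rX0 v := by
    intro v
    rw [hF0a, map_add, map_smul, Yr0i, Yr0e, smul_zero, add_zero]
  have pN0F : ∀ v, pN0 (F0 v) = pM0 v := by
    intro v
    rw [hF0a, map_add, map_smul, Ypi0, YpE0, smul_eq_mul, mul_one, zero_add]
  have rY1F : ∀ v, rY1 (F1 v) = c * rX1 v := by
    intro v
    rw [hF1a, map_add, map_smul, Yr1i, Yr1e, smul_zero, add_zero]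
  have pN1F : ∀ v, pN1 (F1 v) = pM1 v := by
    intro v
    rw [hF1a, map_add, map_smul, Ypi1, YpE1, smul_eq_mul, mul_one, zero_add]
  have rX0G : ∀ v, rX0 (G0 v) = c⁻¹ * rY0 v := by
    intro v
    rw [hG0a, map_add, map_smul, Xr0i, Xr0e, smul_zero, add_zero]
  have pM0G : ∀ v, pM0 (G0 v) = pN0 v := by
    intro v
    rw [hG0a, map_add, map_smul, Xpi0, XpE0, smul_eq_mul, mul_one, zero_add]
  have rX1G : ∀ v, rX1 (G1 v) = c⁻¹ * rY1 v := by
    intro v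
    rw [hG1a, map_add, map_smul, Xr1i, Xr1e, smul_zero, add_zero]
  have pM1G : ∀ v, pM1 (G1 v) = pN1 v := by
    intro v
    rw [hG1a, map_add, map_smul, Xpi1, XpE1, smul_eq_mul, mul_one, zero_add]
  have hFG0 : F0 ∘ₗ G0 = LinearMap.id := by
    apply LinearMap.ext
    intro v
    rw [LinearMap.comp_apply, LinearMap.id_apply, hF0a, rX0G, pM0G,
      ← mul_assoc, mul_inv_cancel₀ hc0, one_mul]
    exact (Ydec0 v).symm
  have hGF0 : G0 ∘ₗ F0 = LinearMap.id := by
    apply LinearMap.ext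
    intro v
    rw [LinearMap.comp_apply, LinearMap.id_apply, hG0a, rY0F, pN0F,
      ← mul_assoc, inv_mul_cancel₀ hc0, one_mul]
    exact (Xdec0 v).symm
  have hFG1 : F1 ∘ₗ G1 = LinearMap.id := by
    apply LinearMap.ext
    intro v
    rw [LinearMap.comp_apply, LinearMap.id_apply, hF1a, rX1G, pM1G,
      ← mul_assoc, mul_inv_cancel₀ hc0, one_mul]
    exact (Ydec1 v).symm
  have hGF1 : G1 ∘ₗ F1 = LinearMap.id := by
    apply LinearMap.ext
    intro v
    rw [LinearMap.comp_apply, LinearMap.id_apply, hG1a, rY1F, pN1F,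
      ← mul_assoc, inv_mul_cancel₀ hc0, one_mul]
    exact (Xdec1 v).symm
  have hFeX0 : F0 eX0 = eY0 := by
    rw [hF0a, Xr0e, mul_zero, map_zero, XpE0, one_smul, zero_add]
  have hFeX1 : F1 eX1 = eY1 := by
    rw [hF1a, Xr1e, mul_zero, map_zero, XpE1, one_smul, zero_add]
  have hF0i : ∀ x : k, F0 (iM0 x) = iN0 (c * x) := by
    intro x
    rw [hF0a, Xr0i, Xpi0, zero_smul, add_zero]
  have hF1i : ∀ x : k, F1 (iM1 x) = iN1 (c * x) := by
    intro x
    rw [hF1a, Xr1i, Xpi1, zero_smul, add_zero]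
  refine ⟨c, hc0, LinearEquiv.ofLinear F0 G0 hFG0 hGF0, LinearEquiv.ofLinear F1 G1 hFG1 hGF1,
    ?_, ?_, ?_, ?_, ?_, ?_, ?_⟩
  · intro v
    simp only [LinearEquiv.ofLinear_apply]
    rw [XA0, map_smul, hFeX0, YA0, pN1F]
  · intro v
    simp only [LinearEquiv.ofLinear_apply]
    rw [XA1, map_add, map_smul, hF0i, hFeX0, YA1, rY1F, pN1F]
  · intro v
    simp only [LinearEquiv.ofLinear_apply]
    rw [XB, map_smul, hF1i, hctX, YB, pN0F]
  · intro x
    simp only [LinearEquiv.ofLinear_apply]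
    exact hF0i x
  · intro x
    simp only [LinearEquiv.ofLinear_apply]
    exact hF1i x
  · intro v
    simp only [LinearEquiv.ofLinear_apply]
    exact pN0F v
  · intro v
    simp only [LinearEquiv.ofLinear_apply]
    exact pN1F v

end abs3

section exist
variable {k : Type} [Field k]

/-- The middle term of the nonsplit extension of R(λ) by R(∞). -/
def ENS (k : Type) [Field k] (lam : k) : LRep k where
  V0 := k × k
  V1 := k × k
  fd0 := inferInstance
  fd1 := inferInstance
  a0 := LinearMap.prod (0 : (k × k) →ₗ[k] k) (LinearMap.snd k k k)
  a1 := LinearMap.prod (LinearMap.fst k k k) (lam • LinearMap.snd k k k)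
  b := LinearMap.prod (LinearMap.snd k k k) (0 : (k × k) →ₗ[k] k)
  rel0 := by
    apply LinearMap.ext
    intro v
    simp
  rel1 := by
    apply LinearMap.ext
    intro v
    simp

lemma ENS_a0 (lam : k) (v : k × k) : (ENS k lam).a0 v = (0, v.2) := rfl
lemma ENS_a1 (lam : k) (v : k × k) : (ENS k lam).a1 v = (v.1, lam * v.2) := by
  show (v.1, lam • v.2) = (v.1, lam * v.2)
  rw [smul_eq_mul]
lemma ENS_b (lam : k) (v : k × k) : (ENS k lam).b v = (v.2, 0) := rfl

/-- The nonsplit extension of R(λ) by R(∞). -/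
def XNS (k : Type) [Field k] (lam : k) : LExt (LR (some lam)) (LR (none : Option k)) where
  E := ENS k lam
  i := { f0 := LinearMap.inl k k k, f1 := LinearMap.inl k k k
         comma0 := by apply LinearMap.ext; intro x; show ((0:k), (0:k)) = ((0:k), (0:k)); rfl
         comma1 := by
           apply LinearMap.ext; intro x
           show ((x:k), (0:k)) = (x, lam • (0:k))
           rw [smul_zero]
         commb := by apply LinearMap.ext; intro x; show ((0:k), (0:k)) = ((0:k), (0:k)); rfl }
  p := { f0 := LinearMap.snd k k k, f1 := LinearMap.snd k k k
         comma0 := by apply LinearMap.ext; intro v; rfl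
         comma1 := by
           apply LinearMap.ext; intro v
           show lam • v.2 = lam • v.2
           rfl
         commb := by apply LinearMap.ext; intro v; rfl }
  inj0 := fun a b h => congrArg Prod.fst h
  inj1 := fun a b h => congrArg Prod.fst h
  surj0 := fun y => ⟨(0, y), rfl⟩
  surj1 := fun y => ⟨(0, y), rfl⟩
  exact0 := by
    ext x
    simp only [LinearMap.mem_range, LinearMap.coe_inl, LinearMap.mem_ker, LinearMap.snd_apply]
    constructor
    · rintro ⟨y, rfl⟩; rfl
    · intro h; exact ⟨x.1, Prod.ext rfl h.symm⟩
  exact1 := by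
    ext x
    simp only [LinearMap.mem_range, LinearMap.coe_inl, LinearMap.mem_ker, LinearMap.snd_apply]
    constructor
    · rintro ⟨y, rfl⟩; rfl
    · intro h; exact ⟨x.1, Prod.ext rfl h.symm⟩

lemma exist_ns (lam : k) :
    ∃ X : LExt (LR (some lam)) (LR (none : Option k)), InD X.E ∧ ¬ X.Splits := by
  refine ⟨XNS k lam, ?_, ?_⟩
  · -- InD
    set q : Submodule k (k × k) := LinearMap.ker (LinearMap.snd k k k) with hq
    have hqmem : ∀ x : k × k, x ∈ q ↔ x.2 = 0 := by
      intro x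
      simp [hq, LinearMap.mem_ker]
    refine ⟨q, q, ⟨?_, ?_, ?_⟩, ?_, ?_, ?_, ?_, ?_, ?_⟩
    · intro x hx
      apply (hqmem _).mpr
      show ((0 : k), x.2).2 = 0
      exact (hqmem x).mp hx
    · intro x hx
      apply (hqmem _).mpr
      show (x.1, lam • x.2).2 = 0
      show lam • x.2 = 0
      rw [(hqmem x).mp hx, smul_zero]
    · intro x hx
      apply (hqmem _).mpr
      rfl
    · intro x hx
      show ((0 : k), x.2) = 0
      rw [(hqmem x).mp hx]
      rfl
    · apply le_antisymm
      · rintro w ⟨y, hy, rfl⟩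
        apply (hqmem _).mpr
        show lam • y.2 = 0
        rw [(hqmem y).mp hy, smul_zero]
      · intro w hw
        refine ⟨w, hw, ?_⟩
        show (w.1, lam • w.2) = w
        rw [(hqmem w).mp hw, smul_zero]
        exact Prod.ext rfl ((hqmem w).mp hw).symm
    · intro x hx h
      have h1 : x.1 = 0 := congrArg Prod.fst h
      exact Prod.ext h1 ((hqmem x).mp hx)
    · intro x hx
      show (x.2, (0 : k)) = 0
      rw [(hqmem x).mp hx]
      rfl
    · intro x
      apply (hqmem _).mpr
      rfl
    · intro h0 h1
      have hsurj : Function.Surjective (Submodule.mapQ q q (ENS k lam).a0 h0) := by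
        intro w
        obtain ⟨x, rfl⟩ := q.mkQ_surjective w
        refine ⟨q.mkQ x, ?_⟩
        exact (Submodule.Quotient.eq q).mpr ((hqmem _).mpr (sub_self x.2))
      have hinj : Function.Injective (Submodule.mapQ q q (ENS k lam).a0 h0) := by
        intro w1 w2 h
        obtain ⟨x1, rfl⟩ := q.mkQ_surjective w1
        obtain ⟨x2, rfl⟩ := q.mkQ_surjective w2
        replace h := (Submodule.Quotient.eq q (x := (ENS k lam).a0 x1) (y := (ENS k lam).a0 x2)).mp h
        have h2 : x1.2 - x2.2 = 0 := (hqmem _).mp h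
        rw [Submodule.mkQ_apply, Submodule.mkQ_apply, Submodule.Quotient.eq]
        rw [hqmem]
        exact h2
      refine ⟨⟨hinj, hsurj⟩, (lam • LinearMap.id : Module.End k ((k × k) ⧸ q)), ?_, ?_⟩
      · show Submodule.mapQ q q (ENS k lam).a1 h1 = (lam • LinearMap.id : Module.End k ((k × k) ⧸ q)) ∘ₗ Submodule.mapQ q q (ENS k lam).a0 h0
        apply LinearMap.ext
        intro w
        obtain ⟨x, rfl⟩ := q.mkQ_surjective w
        exact (Submodule.Quotient.eq q (x := (ENS k lam).a1 x) (y := lam • (ENS k lam).a0 x)).mpr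
          ((hqmem _).mpr (sub_self (lam • x.2)))
      · rw [eq_top_iff]
        show (⊤ : Submodule k ((k × k) ⧸ q)) ≤ ⨆ ν : k, Module.End.eigenspace (lam • LinearMap.id : Module.End k ((k × k) ⧸ q)) ν
        intro w _
        exact Submodule.mem_iSup_of_mem lam ((Module.End.mem_eigenspace_iff).mpr rfl)
  · -- nonsplit
    rintro ⟨r, hr0, hr1⟩
    have h := LinearMap.congr_fun r.commb ((0 : k), (1 : k))
    change r.f1 ((XNS k lam).E.b ((0 : k), (1 : k))) = (LR (none : Option k)).b (r.f0 ((0 : k), (1 : k))) at h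
    have h2 : r.f1 ((1 : k), (0 : k)) = 0 := by
      rw [show ((1 : k), (0 : k)) = (XNS k lam).E.b ((0 : k), (1 : k)) from rfl, h]
      rfl
    have h3 : r.f1 ((1 : k), (0 : k)) = ((1 : k) : (LR (none : Option k)).V1) :=
      hr1 (show (LR (none : Option k)).V1 from (1 : k))
    have h4 : (1 : k) = 0 := h3.symm.trans h2
    exact one_ne_zero h4

end exist

/-- Ext¹ computed in D satisfies Ext¹_D(R(λ), R(μ)) ≅ k when
λ ∈ k and μ = ∞ (there is a nonsplit extension with middle term in D, and any
two such are equivalent after rescaling by a nonzero scalar c ∈ k, so the Ext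
group is one-dimensional) and Ext¹_D(R(λ), R(μ)) = 0 otherwise (every extension
with middle term in D splits). -/
theorem stmt14 (k : Type) [Field k] [IsAlgClosed k] (l m : Option k) :
    (((∃ c : k, l = some c) ∧ m = none) →
      ((∃ X : LExt (LR l) (LR m), InD X.E ∧ ¬ X.Splits) ∧
       (∀ X Y : LExt (LR l) (LR m), InD X.E → InD Y.E → ¬ X.Splits → ¬ Y.Splits →
         ∃ c : k, c ≠ 0 ∧
         ∃ (e0 : X.E.V0 ≃ₗ[k] Y.E.V0) (e1 : X.E.V1 ≃ₗ[k] Y.E.V1),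
           (∀ x, e0 (X.E.a0 x) = Y.E.a0 (e1 x)) ∧
           (∀ x, e0 (X.E.a1 x) = Y.E.a1 (e1 x)) ∧
           (∀ x, e1 (X.E.b x) = Y.E.b (e0 x)) ∧
           (∀ x, e0 (X.i.f0 x) = Y.i.f0 (c • x)) ∧
           (∀ x, e1 (X.i.f1 x) = Y.i.f1 (c • x)) ∧
           (∀ x, Y.p.f0 (e0 x) = X.p.f0 x) ∧
           (∀ x, Y.p.f1 (e1 x) = X.p.f1 x)))) ∧
    (¬ ((∃ c : k, l = some c) ∧ m = none) →
      ∀ X : LExt (LR l) (LR m), InD X.E → X.Splits) := by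
  constructor
  · rintro ⟨⟨lam, rfl⟩, rfl⟩
    constructor
    · exact exist_ns lam
    · intro X Y hXD hYD hXns hYns
      -- structure facts for X
      have Xia0 : ∀ x : k, X.E.a0 (X.i.f1 x) = 0 := fun x =>
        (LinearMap.congr_fun X.i.comma0 x).symm.trans (map_zero X.i.f0)
      have Xia1 : ∀ x : k, X.E.a1 (X.i.f1 x) = X.i.f0 x := fun x =>
        (LinearMap.congr_fun X.i.comma1 x).symm
      have Xib : ∀ x : k, X.E.b (X.i.f0 x) = 0 := fun x =>
        (LinearMap.congr_fun X.i.commb x).symm.trans (map_zero X.i.f1)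
      have Xpa0 : ∀ v, X.p.f0 (X.E.a0 v) = X.p.f1 v := fun v =>
        LinearMap.congr_fun X.p.comma0 v
      have Xpa1 : ∀ v, X.p.f0 (X.E.a1 v) = lam • X.p.f1 v := fun v =>
        LinearMap.congr_fun X.p.comma1 v
      have Xpb : ∀ v, X.p.f1 (X.E.b v) = 0 := fun v =>
        LinearMap.congr_fun X.p.commb v
      obtain ⟨eX0, eX1, rX0, rX1, tX, XpE0, XpE1, Xr0i, Xr0e, Xr1i, Xr1e, Xpi0, Xpi1,
        Xdec0, Xdec1, XA0, XA1, XB, Xsp⟩ :=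
        std_abs X.E lam X.i.f0 X.i.f1 X.p.f0 X.p.f1 X.inj0 X.inj1 X.surj1 X.exact0
          X.exact1 Xia0 Xia1 Xib Xpa0 Xpa1 Xpb
      have Yia0 : ∀ x : k, Y.E.a0 (Y.i.f1 x) = 0 := fun x =>
        (LinearMap.congr_fun Y.i.comma0 x).symm.trans (map_zero Y.i.f0)
      have Yia1 : ∀ x : k, Y.E.a1 (Y.i.f1 x) = Y.i.f0 x := fun x =>
        (LinearMap.congr_fun Y.i.comma1 x).symm
      have Yib : ∀ x : k, Y.E.b (Y.i.f0 x) = 0 := fun x =>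
        (LinearMap.congr_fun Y.i.commb x).symm.trans (map_zero Y.i.f1)
      have Ypa0 : ∀ v, Y.p.f0 (Y.E.a0 v) = Y.p.f1 v := fun v =>
        LinearMap.congr_fun Y.p.comma0 v
      have Ypa1 : ∀ v, Y.p.f0 (Y.E.a1 v) = lam • Y.p.f1 v := fun v =>
        LinearMap.congr_fun Y.p.comma1 v
      have Ypb : ∀ v, Y.p.f1 (Y.E.b v) = 0 := fun v =>
        LinearMap.congr_fun Y.p.commb v
      obtain ⟨eY0, eY1, rY0, rY1, tY, YpE0, YpE1, Yr0i, Yr0e, Yr1i, Yr1e, Ypi0, Ypi1,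
        Ydec0, Ydec1, YA0, YA1, YB, Ysp⟩ :=
        std_abs Y.E lam Y.i.f0 Y.i.f1 Y.p.f0 Y.p.f1 Y.inj0 Y.inj1 Y.surj1 Y.exact0
          Y.exact1 Yia0 Yia1 Yib Ypa0 Ypa1 Ypb
      have htX : tX ≠ 0 := by
        intro h0
        obtain ⟨s0, s1, s2⟩ := Xsp h0
        exact hXns ⟨⟨rX0, rX1, LinearMap.ext fun v => s0 v, LinearMap.ext fun v => s1 v,
          LinearMap.ext fun v => s2 v⟩, fun x => Xr0i x, fun x => Xr1i x⟩
      have htY : tY ≠ 0 := by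
        intro h0
        obtain ⟨s0, s1, s2⟩ := Ysp h0
        exact hYns ⟨⟨rY0, rY1, LinearMap.ext fun v => s0 v, LinearMap.ext fun v => s1 v,
          LinearMap.ext fun v => s2 v⟩, fun x => Yr0i x, fun x => Yr1i x⟩
      obtain ⟨c, hc0, f0, f1, h1, h2, h3, h4, h5, h6, h7⟩ :=
        uniq_abs lam X.E Y.E X.i.f0 X.i.f1 X.p.f0 X.p.f1 Y.i.f0 Y.i.f1 Y.p.f0 Y.p.f1
          eX0 eX1 rX0 rX1 tX eY0 eY1 rY0 rY1 tY
          XpE0 XpE1 Xr0i Xr0e Xr1i Xr1e Xpi0 Xpi1 Xdec0 Xdec1 XA0 XA1 XB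
          YpE0 YpE1 Yr0i Yr0e Yr1i Yr1e Ypi0 Ypi1 Ydec0 Ydec1 YA0 YA1 YB htX htY
      exact ⟨c, hc0, f0, f1, h1, h2, h3, fun x => h4 x, fun x => h5 x,
        fun x => h6 x, fun x => h7 x⟩
  · intro hno
    rcases l with _ | lam <;> rcases m with _ | mu
    · -- l = ∞, m = ∞
      intro X hXD
      have ia0 : ∀ x : k, X.E.a0 (X.i.f1 x) = 0 := fun x =>
        (LinearMap.congr_fun X.i.comma0 x).symm.trans (map_zero X.i.f0)
      have ia1 : ∀ x : k, X.E.a1 (X.i.f1 x) = X.i.f0 x := fun x =>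
        (LinearMap.congr_fun X.i.comma1 x).symm
      have ib : ∀ x : k, X.E.b (X.i.f0 x) = 0 := fun x =>
        (LinearMap.congr_fun X.i.commb x).symm.trans (map_zero X.i.f1)
      have pa0 : ∀ v, X.p.f0 (X.E.a0 v) = 0 := fun v =>
        LinearMap.congr_fun X.p.comma0 v
      have pa1 : ∀ v, X.p.f0 (X.E.a1 v) = X.p.f1 v := fun v =>
        LinearMap.congr_fun X.p.comma1 v
      have pb : ∀ v, X.p.f1 (X.E.b v) = 0 := fun v =>
        LinearMap.congr_fun X.p.commb v
      obtain ⟨r0, r1, hr0i, hr1i, s0, s1, s2⟩ :=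
        split_nn X.E X.i.f0 X.i.f1 X.p.f0 X.p.f1 X.inj0 X.inj1 X.surj1 X.exact0
          X.exact1 ia0 ia1 ib pa0 pa1 pb hXD
      exact ⟨⟨r0, r1, LinearMap.ext fun v => s0 v, LinearMap.ext fun v => s1 v,
        LinearMap.ext fun v => s2 v⟩, fun x => hr0i x, fun x => hr1i x⟩
    · -- l = ∞, m = mu
      intro X hXD
      have ia0 : ∀ x : k, X.E.a0 (X.i.f1 x) = X.i.f0 x := fun x =>
        (LinearMap.congr_fun X.i.comma0 x).symm
      have ia1 : ∀ x : k, X.E.a1 (X.i.f1 x) = mu • X.i.f0 x := by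
        intro x
        have h : X.i.f0 ((LR (some mu)).a1 x) = mu • X.i.f0 x := by
          exact map_smul X.i.f0 mu x
        exact (LinearMap.congr_fun X.i.comma1 x).symm.trans h
      have ib : ∀ x : k, X.E.b (X.i.f0 x) = 0 := fun x =>
        (LinearMap.congr_fun X.i.commb x).symm.trans (map_zero X.i.f1)
      have pa0 : ∀ v, X.p.f0 (X.E.a0 v) = 0 := fun v =>
        LinearMap.congr_fun X.p.comma0 v
      have pa1 : ∀ v, X.p.f0 (X.E.a1 v) = X.p.f1 v := fun v =>
        LinearMap.congr_fun X.p.comma1 v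
      have pb : ∀ v, X.p.f1 (X.E.b v) = 0 := fun v =>
        LinearMap.congr_fun X.p.commb v
      obtain ⟨r0, r1, hr0i, hr1i, s0, s1, s2⟩ :=
        split_ns X.E mu X.i.f0 X.i.f1 X.p.f0 X.p.f1 X.inj0 X.inj1 X.surj1 X.exact0
          X.exact1 ia0 ia1 ib pa0 pa1 pb hXD
      exact ⟨⟨r0, r1, LinearMap.ext fun v => s0 v, LinearMap.ext fun v => s1 v,
        LinearMap.ext fun v => s2 v⟩, fun x => hr0i x, fun x => hr1i x⟩
    · -- l = lam, m = ∞ : contradicts hno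
      exact absurd ⟨⟨lam, rfl⟩, rfl⟩ hno
    · -- l = lam, m = mu
      intro X hXD
      have ia0 : ∀ x : k, X.E.a0 (X.i.f1 x) = X.i.f0 x := fun x =>
        (LinearMap.congr_fun X.i.comma0 x).symm
      have ia1 : ∀ x : k, X.E.a1 (X.i.f1 x) = mu • X.i.f0 x := by
        intro x
        have h : X.i.f0 ((LR (some mu)).a1 x) = mu • X.i.f0 x := by
          exact map_smul X.i.f0 mu x
        exact (LinearMap.congr_fun X.i.comma1 x).symm.trans h
      have ib : ∀ x : k, X.E.b (X.i.f0 x) = 0 := fun x =>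
        (LinearMap.congr_fun X.i.commb x).symm.trans (map_zero X.i.f1)
      have pa0 : ∀ v, X.p.f0 (X.E.a0 v) = X.p.f1 v := fun v =>
        LinearMap.congr_fun X.p.comma0 v
      have pa1 : ∀ v, X.p.f0 (X.E.a1 v) = lam • X.p.f1 v := fun v =>
        LinearMap.congr_fun X.p.comma1 v
      have pb : ∀ v, X.p.f1 (X.E.b v) = 0 := fun v =>
        LinearMap.congr_fun X.p.commb v
      obtain ⟨r0, r1, hr0i, hr1i, s0, s1, s2⟩ :=
        split_ss X.E lam mu X.i.f0 X.i.f1 X.p.f0 X.p.f1 X.inj0 X.inj1 X.surj1 X.exact0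
          X.exact1 ia0 ia1 ib pa0 pa1 pb hXD
      exact ⟨⟨r0, r1, LinearMap.ext fun v => s0 v, LinearMap.ext fun v => s1 v,
        LinearMap.ext fun v => s2 v⟩, fun x => hr0i x, fun x => hr1i x⟩
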